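/- Under Assumption [A2], for every s > 0, every y ∈ Y, every coordinate i with y_i = K, and every token k ∈ {1,…,K−1}, one has q_s(y) > 0 and the discrete score (density ratio) satisfies q_s(y[i→k]) / q_s(y) ≤ 1 / (e^{s} − 1). -/

import Mathlib

open Matrix Finset

/-- The mask token: token `K` in the vocabulary `{1,…,K}`, modeled as the last
element of `Fin K`. -/
def maskTok (K : ℕ) [NeZero K] : Fin K :=
  ⟨K - 1, Nat.sub_lt (Nat.pos_of_ne_zero (NeZero.ne K)) Nat.one_pos⟩

/-- The number of mask tokens in a sequence. -/
def numK (K d : ℕ) [NeZero K] (y : Fin d → Fin K) : ℕ :=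
  (Finset.univ.filter fun i => y i = maskTok K).card

/-- Hamming distance between two sequences. -/
def ham {K d : ℕ} (y y' : Fin d → Fin K) : ℕ :=
  (Finset.univ.filter fun i => y i ≠ y' i).card

/-- The masked (absorbing) forward transition-rate matrix: `R y y' = 1` if
`Ham(y,y') = 1` and the differing coordinate of `y` is the mask token,
`R y' y' = -(d - numK y')`, and `0` otherwise. -/
noncomputable def fwdRate (K d : ℕ) [NeZero K] :
    Matrix (Fin d → Fin K) (Fin d → Fin K) ℝ := fun y y' =>
  if y = y' then -((d : ℝ) - (numK K d y' : ℝ))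
  else if ham y y' = 1 ∧ ∀ i, y i ≠ y' i → y i = maskTok K then 1 else 0

/-- The forward marginal at time `t`: `q_t = exp(tR) · q₀`. -/
noncomputable def qt (K d : ℕ) [NeZero K] (q0 : (Fin d → Fin K) → ℝ) (t : ℝ) :
    (Fin d → Fin K) → ℝ :=
  NormedSpace.exp (t • fwdRate K d) *ᵥ q0


noncomputable def Sfun (K d : ℕ) [NeZero K] (q0 : (Fin d → Fin K) → ℝ)
    (y : Fin d → Fin K) : ℝ :=
  ∑ x ∈ Finset.univ.filter
      (fun x => numK K d x = 0 ∧ ∀ j, y j ≠ maskTok K → x j = y j), q0 x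

noncomputable def uvec (K d : ℕ) [NeZero K] (q0 : (Fin d → Fin K) → ℝ) (l : ℕ) :
    (Fin d → Fin K) → ℝ :=
  fun y => (-1 : ℝ) ^ (numK K d y + l) * ((numK K d y).choose l : ℝ) * Sfun K d q0 y

theorem exp_mulVec_eigen {n : Type*} [Fintype n] [DecidableEq n]
    (A : Matrix n n ℝ) (w : n → ℝ) (lam : ℝ) (h : A *ᵥ w = lam • w) :
    NormedSpace.exp A *ᵥ w = Real.exp lam • w := by
  letI : SeminormedRing (Matrix n n ℝ) := Matrix.linftyOpSemiNormedRing
  letI : NormedRing (Matrix n n ℝ) := Matrix.linftyOpNormedRing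
  letI : NormedAlgebra ℝ (Matrix n n ℝ) := Matrix.linftyOpNormedAlgebra
  have hpow : ∀ m : ℕ, A ^ m *ᵥ w = lam ^ m • w := by
    intro m
    induction m with
    | zero => simp
    | succ m ih =>
      rw [pow_succ', pow_succ', ← Matrix.mulVec_mulVec, ih, Matrix.mulVec_smul, h,
        smul_smul, mul_comm]
  let L : Matrix n n ℝ →L[ℝ] (n → ℝ) :=
    LinearMap.toContinuousLinearMap
      { toFun := fun B => B *ᵥ w
        map_add' := fun B C => Matrix.add_mulVec B C w
        map_smul' := fun c B => Matrix.smul_mulVec c B w }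
  have hL : ∀ B : Matrix n n ℝ, L B = B *ᵥ w := fun _ => rfl
  rw [NormedSpace.exp_eq_tsum ℝ]
  rw [← hL, L.map_tsum (NormedSpace.expSeries_summable' A)]
  simp_rw [hL, Matrix.smul_mulVec, hpow, smul_smul]
  rw [Summable.tsum_smul_const]
  · congr 1
    rw [Real.exp_eq_exp_ℝ, NormedSpace.exp_eq_tsum ℝ]
    simp [smul_eq_mul]
  · exact (NormedSpace.expSeries_summable' (𝕂 := ℝ) lam).congr (by simp [smul_eq_mul])


section lems
variable (K d : ℕ) [NeZero K]

lemma numK_eq_zero_iff (x : Fin d → Fin K) :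
    numK K d x = 0 ↔ ∀ j, x j ≠ maskTok K := by
  simp [numK, Finset.card_eq_zero, Finset.filter_eq_empty_iff]

lemma mask_filter_update (y : Fin d → Fin K) (i : Fin d) (k : Fin K)
    (hk : k ≠ maskTok K) :
    Finset.univ.filter (fun j => Function.update y i k j = maskTok K)
      = (Finset.univ.filter (fun j => y j = maskTok K)).erase i := by
  ext j
  by_cases h : j = i
  · subst h; simp [Function.update_self, hk]
  · simp [Function.update_of_ne h, h]

lemma numK_update (y : Fin d → Fin K) (i : Fin d) (k : Fin K)
    (hi : y i = maskTok K) (hk : k ≠ maskTok K) :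
    numK K d (Function.update y i k) = numK K d y - 1 := by
  rw [numK, mask_filter_update K d y i k hk, Finset.card_erase_of_mem (by simp [hi])]
  rfl

lemma S_update_sum (q0 : (Fin d → Fin K) → ℝ) (y : Fin d → Fin K) (i : Fin d)
    (hi : y i = maskTok K) :
    ∑ k ∈ Finset.univ.filter (fun k => k ≠ maskTok K),
      Sfun K d q0 (Function.update y i k) = Sfun K d q0 y := by
  have hmaps : ∀ x ∈ Finset.univ.filter
      (fun x : Fin d → Fin K => numK K d x = 0 ∧ ∀ j, y j ≠ maskTok K → x j = y j),
      x i ∈ Finset.univ.filter (fun k : Fin K => k ≠ maskTok K) := by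
    intro x hx
    simp only [Finset.mem_filter, Finset.mem_univ, true_and] at hx ⊢
    exact (numK_eq_zero_iff K d x).mp hx.1 i
  have hpart := Finset.sum_fiberwise_of_maps_to (g := fun x => x i) hmaps q0
  rw [Sfun, ← hpart]
  refine Finset.sum_congr rfl fun k hk => ?_
  simp only [Finset.mem_filter, Finset.mem_univ, true_and] at hk
  rw [Sfun]
  congr 1
  ext x
  simp only [Finset.mem_filter, Finset.mem_univ, true_and]
  constructor
  · rintro ⟨h0, hagree⟩
    have hxi : x i = k := by
      have := hagree i (by rw [Function.update_self]; exact hk)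
      rwa [Function.update_self] at this
    refine ⟨⟨h0, fun j hj => ?_⟩, hxi⟩
    have h : j ≠ i := fun h => by subst h; exact hj hi
    have := hagree j (by rw [Function.update_of_ne h]; exact hj)
    rwa [Function.update_of_ne h] at this
  · rintro ⟨⟨h0, hagree⟩, hxi⟩
    refine ⟨h0, fun j hj => ?_⟩
    by_cases h : j = i
    · subst h; rw [Function.update_self]; exact hxi
    · rw [Function.update_of_ne h] at hj ⊢; exact hagree j hj

-- the set of "parents" of y
lemma offdiag_set_eq (y : Fin d → Fin K) :
    (Finset.univ.erase y).filter
        (fun y' => ham y y' = 1 ∧ ∀ i, y i ≠ y' i → y i = maskTok K)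
      = Finset.image (fun p : Fin d × Fin K => Function.update y p.1 p.2)
          ((Finset.univ.filter fun j => y j = maskTok K) ×ˢ
            (Finset.univ.filter fun k => k ≠ maskTok K)) := by
  ext y'
  simp only [Finset.mem_filter, Finset.mem_erase, Finset.mem_univ, true_and, and_true,
    Finset.mem_image, Finset.mem_product]
  constructor
  · rintro ⟨hne, hham, hmask⟩
    obtain ⟨j, hj⟩ := Finset.card_eq_one.mp hham
    have hjmem : y j ≠ y' j := by
      have : j ∈ Finset.univ.filter (fun i => y i ≠ y' i) := hj ▸ Finset.mem_singleton_self j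
      exact (Finset.mem_filter.mp this).2
    have hyj : y j = maskTok K := hmask j hjmem
    refine ⟨(j, y' j), ⟨hyj, fun h => hjmem (by
      rw [hyj]; exact (show y' j = maskTok K from h).symm)⟩, ?_⟩
    funext w
    by_cases hw : w = j
    · subst hw; simp [Function.update_self]
    · rw [Function.update_of_ne hw]
      by_contra hne'
      have : w ∈ Finset.univ.filter (fun i => y i ≠ y' i) := by
        simp [hne']
      rw [hj, Finset.mem_singleton] at this
      exact hw this
  · rintro ⟨⟨j, k⟩, ⟨hj, hk⟩, rfl⟩
    simp only [Finset.mem_filter, Finset.mem_univ, true_and] at hj hk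
    dsimp only
    have hdiff : y j ≠ Function.update y j k j := by
      rw [Function.update_self, hj]; exact fun h => hk h.symm
    have hfilter : (Finset.univ.filter fun i => y i ≠ Function.update y j k i) = {j} := by
      ext w
      simp only [Finset.mem_filter, Finset.mem_univ, true_and, Finset.mem_singleton]
      by_cases hw : w = j
      · subst hw; simpa using hdiff
      · simp [Function.update_of_ne hw, hw]
    have hne : Function.update y j k ≠ y := by
      intro h
      apply hk
      have := congrFun h j
      rwa [Function.update_self, hj] at this
    refine ⟨hne, ?_, ?_⟩
    · rw [ham, hfilter, Finset.card_singleton]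
    · intro w hw
      have : w ∈ Finset.univ.filter (fun i => y i ≠ Function.update y j k i) := by simp [hw]
      rw [hfilter, Finset.mem_singleton] at this
      subst this; exact hj

lemma update_injOn (y : Fin d → Fin K) :
    Set.InjOn (fun p : Fin d × Fin K => Function.update y p.1 p.2)
      ((Finset.univ.filter fun j => y j = maskTok K) ×ˢ
        (Finset.univ.filter fun k => k ≠ maskTok K)) := by
  rintro ⟨j, k⟩ hjk ⟨j', k'⟩ hjk' heq
  simp only [Finset.coe_product, Set.mem_prod, Finset.coe_filter, Set.mem_setOf_eq,
    Finset.mem_univ, true_and] at hjk hjk'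
  have hjj : j = j' := by
    by_contra h
    have := congrFun heq j
    dsimp only at this
    rw [Function.update_self, Function.update_of_ne h] at this
    exact hjk.2 (this.trans hjk.1)
  subst hjj
  have := congrFun heq j
  dsimp only at this
  rw [Function.update_self, Function.update_self] at this
  exact Prod.ext rfl this

end lems

lemma choose_key (n l : ℕ) :
    ((n:ℝ) + 1) * ((n.choose l : ℝ)) = (((n:ℝ) + 1) - l) * (((n+1).choose l : ℝ)) := by
  rcases le_or_gt l (n+1) with h | h
  · have key := Nat.choose_mul_succ_eq n l
    have : ((n.choose l * (n+1) : ℕ) : ℝ) = (((n+1).choose l * (n + 1 - l) : ℕ) : ℝ) := by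
      rw [key]
    push_cast [Nat.cast_sub h] at this
    linarith
  · rw [Nat.choose_eq_zero_of_lt (by omega), Nat.choose_eq_zero_of_lt (by omega)]
    simp

lemma eigen_algebra (D : ℝ) (m l : ℕ) :
    -(D - m) * ((-1:ℝ)^(m+l) * (m.choose l : ℝ))
      + m * ((-1:ℝ)^(m-1+l) * ((m-1).choose l : ℝ))
    = -(D - l) * ((-1:ℝ)^(m+l) * (m.choose l : ℝ)) := by
  rcases m with _ | n
  · rcases l with _ | l'
    · simp
    · simp [Nat.choose]
  · have key := choose_key n l
    have hsub : (n + 1) - 1 = n := rfl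
    rw [hsub]
    have hpow : (-1:ℝ)^(n+1+l) = -(-1:ℝ)^(n+l) := by
      rw [show n+1+l = (n+l)+1 by omega, pow_succ]; ring
    rw [hpow]
    push_cast
    linear_combination ((-1:ℝ)^(n+l)) * key

section eigen
variable (K d : ℕ) [NeZero K]

lemma fwdRate_mulVec (q0 : (Fin d → Fin K) → ℝ) (l : ℕ) :
    fwdRate K d *ᵥ uvec K d q0 l = (-((d:ℝ) - l)) • uvec K d q0 l := by
  funext y
  have hdiag : fwdRate K d y y = -((d : ℝ) - (numK K d y : ℝ)) := by
    rw [fwdRate]; simp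
  have step1 : (fwdRate K d *ᵥ uvec K d q0 l) y
      = fwdRate K d y y * uvec K d q0 l y +
        ∑ y' ∈ Finset.univ.erase y, fwdRate K d y y' * uvec K d q0 l y' := by
    rw [Matrix.mulVec, dotProduct]
    exact (Finset.add_sum_erase _ _ (Finset.mem_univ y)).symm
  have step2 : ∑ y' ∈ Finset.univ.erase y, fwdRate K d y y' * uvec K d q0 l y'
      = ∑ y' ∈ (Finset.univ.erase y).filter
          (fun y' => ham y y' = 1 ∧ ∀ i, y i ≠ y' i → y i = maskTok K),
          uvec K d q0 l y' := by
    rw [Finset.sum_filter]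
    refine Finset.sum_congr rfl fun y' hy' => ?_
    have hne : y ≠ y' := (Finset.ne_of_mem_erase hy').symm
    rw [fwdRate]
    rw [if_neg hne]
    split_ifs with h
    · rw [one_mul]
    · rw [zero_mul]
  have step3 : ∑ y' ∈ (Finset.univ.erase y).filter
          (fun y' => ham y y' = 1 ∧ ∀ i, y i ≠ y' i → y i = maskTok K),
          uvec K d q0 l y'
      = (numK K d y : ℝ) * ((-1:ℝ)^(numK K d y - 1 + l)
          * (((numK K d y - 1).choose l : ℝ)) * Sfun K d q0 y) := by
    rw [offdiag_set_eq, Finset.sum_image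
      (fun p hp q hq h => update_injOn K d y (by simpa using hp) (by simpa using hq) h), Finset.sum_product]
    have hinner : ∀ j ∈ Finset.univ.filter (fun j => y j = maskTok K),
        ∑ k ∈ Finset.univ.filter (fun k => k ≠ maskTok K),
          uvec K d q0 l (Function.update y j k)
        = (-1:ℝ)^(numK K d y - 1 + l) * (((numK K d y - 1).choose l : ℝ))
            * Sfun K d q0 y := by
      intro j hj
      have hj' : y j = maskTok K := (Finset.mem_filter.mp hj).2
      have : ∀ k ∈ Finset.univ.filter (fun k : Fin K => k ≠ maskTok K),
          uvec K d q0 l (Function.update y j k)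
          = (-1:ℝ)^(numK K d y - 1 + l) * (((numK K d y - 1).choose l : ℝ))
              * Sfun K d q0 (Function.update y j k) := by
        intro k hk
        have hk' : k ≠ maskTok K := (Finset.mem_filter.mp hk).2
        rw [uvec, numK_update K d y j k hj' hk']
      rw [Finset.sum_congr rfl this]
      rw [← Finset.mul_sum, S_update_sum K d q0 y j hj']
    rw [Finset.sum_congr rfl hinner, Finset.sum_const, nsmul_eq_mul]
    rfl
  rw [step1, step2, step3, hdiag]
  have := eigen_algebra (d : ℝ) (numK K d y) l
  show _ = (-((d:ℝ) - l)) * uvec K d q0 l y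
  rw [uvec]
  linear_combination (Sfun K d q0 y) * eigen_algebra (d : ℝ) (numK K d y) l
end eigen

section more
variable (K d : ℕ) [NeZero K]

lemma numK_le (y : Fin d → Fin K) : numK K d y ≤ d := by
  rw [numK]
  exact (Finset.card_filter_le _ _).trans (by simp)

lemma Sfun_eq_q0 (q0 : (Fin d → Fin K) → ℝ) (y : Fin d → Fin K)
    (h : numK K d y = 0) : Sfun K d q0 y = q0 y := by
  rw [Sfun]
  have hset : Finset.univ.filter
      (fun x : Fin d → Fin K => numK K d x = 0 ∧ ∀ j, y j ≠ maskTok K → x j = y j)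
      = {y} := by
    ext x
    simp only [Finset.mem_filter, Finset.mem_univ, true_and, Finset.mem_singleton]
    constructor
    · rintro ⟨_, hag⟩
      funext j
      exact hag j ((numK_eq_zero_iff K d y).mp h j)
    · rintro rfl
      exact ⟨h, fun j _ => rfl⟩
  rw [hset, Finset.sum_singleton]

lemma sum_uvec (q0 : (Fin d → Fin K) → ℝ)
    (hq0nonneg : ∀ y, 0 ≤ q0 y) (hA2 : ∀ y, 0 < q0 y ↔ numK K d y = 0) :
    ∑ l ∈ Finset.range (d+1), uvec K d q0 l = q0 := by
  funext y
  rw [Finset.sum_apply]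
  set m := numK K d y with hm
  have hrestrict : ∑ l ∈ Finset.range (d+1), uvec K d q0 l y
      = ∑ l ∈ Finset.range (m+1), uvec K d q0 l y := by
    refine (Finset.sum_subset (Finset.range_subset_range.mpr (by
      have := numK_le K d y; omega)) fun l _ hl => ?_).symm
    rw [Finset.mem_range, not_lt] at hl
    rw [uvec, ← hm, Nat.choose_eq_zero_of_lt (by omega)]
    simp
  rw [hrestrict]
  have hsum : ∑ l ∈ Finset.range (m+1), uvec K d q0 l y
      = ((-1:ℝ)^m * ∑ l ∈ Finset.range (m+1), (-1:ℝ)^l * (m.choose l : ℝ))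
          * Sfun K d q0 y := by
    rw [Finset.mul_sum, Finset.sum_mul]
    refine Finset.sum_congr rfl fun l _ => ?_
    rw [uvec, ← hm, pow_add]
    ring
  rw [hsum]
  have halt : ∑ l ∈ Finset.range (m+1), (-1:ℝ)^l * (m.choose l : ℝ)
      = if m = 0 then 1 else 0 := by
    have := Int.alternating_sum_range_choose (n := m)
    have hcast : ((∑ i ∈ Finset.range (m+1), (-1:ℤ)^i * (m.choose i : ℤ) : ℤ) : ℝ)
        = ∑ l ∈ Finset.range (m+1), (-1:ℝ)^l * (m.choose l : ℝ) := by
      push_cast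
      rfl
    rw [← hcast, this]
    split_ifs <;> simp
  rw [halt]
  by_cases hm0 : m = 0
  · rw [if_pos hm0, hm0]
    rw [Sfun_eq_q0 K d q0 y hm0]
    ring
  · rw [if_neg hm0]
    have hq : q0 y = 0 := by
      have h1 := hq0nonneg y
      have h2 : ¬ 0 < q0 y := fun h => hm0 ((hA2 y).mp h)
      linarith
    rw [hq]
    ring

lemma qt_eq (q0 : (Fin d → Fin K) → ℝ)
    (hq0nonneg : ∀ y, 0 ≤ q0 y) (hA2 : ∀ y, 0 < q0 y ↔ numK K d y = 0)
    (t : ℝ) (y : Fin d → Fin K) :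
    qt K d q0 t y
      = Real.exp (t * -((d:ℝ) - (numK K d y : ℝ)))
          * (1 - Real.exp (-t)) ^ (numK K d y) * Sfun K d q0 y := by
  have hq0 : q0 = ∑ l ∈ Finset.range (d+1), uvec K d q0 l :=
    (sum_uvec K d q0 hq0nonneg hA2).symm
  have hstep : qt K d q0 t
      = ∑ l ∈ Finset.range (d+1),
          Real.exp (t * -((d:ℝ) - l)) • uvec K d q0 l := by
    rw [qt]
    conv_lhs => rw [hq0]
    rw [show (NormedSpace.exp (t • fwdRate K d)) *ᵥ
        (∑ l ∈ Finset.range (d+1), uvec K d q0 l)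
        = ∑ l ∈ Finset.range (d+1),
            (NormedSpace.exp (t • fwdRate K d)) *ᵥ uvec K d q0 l from
      map_sum ((NormedSpace.exp (t • fwdRate K d)).mulVecLin) _ _]
    refine Finset.sum_congr rfl fun l _ => ?_
    refine exp_mulVec_eigen _ _ _ ?_
    rw [Matrix.smul_mulVec, fwdRate_mulVec K d q0 l, smul_smul]
  rw [hstep]
  rw [Finset.sum_apply]
  set m := numK K d y with hm
  have hml : m ≤ d := numK_le K d y
  have hrestrict : ∑ l ∈ Finset.range (d+1),
        (Real.exp (t * -((d:ℝ) - l)) • uvec K d q0 l) y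
      = ∑ l ∈ Finset.range (m+1),
        (Real.exp (t * -((d:ℝ) - l)) • uvec K d q0 l) y := by
    refine (Finset.sum_subset (Finset.range_subset_range.mpr (by omega))
      fun l _ hl => ?_).symm
    rw [Finset.mem_range, not_lt] at hl
    simp only [Pi.smul_apply, smul_eq_mul]
    rw [uvec, ← hm, Nat.choose_eq_zero_of_lt (by omega)]
    simp
  rw [hrestrict]
  have hbinom := add_pow (1:ℝ) (-Real.exp (-t)) m
  have hterm : ∀ l ∈ Finset.range (m+1),
      (Real.exp (t * -((d:ℝ) - l)) • uvec K d q0 l) y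
      = Real.exp (t * -((d:ℝ) - (m:ℝ)))
          * ((1:ℝ)^l * (-Real.exp (-t))^(m-l) * (m.choose l : ℝ))
          * Sfun K d q0 y := by
    intro l hl
    have hlm : l ≤ m := Nat.lt_succ_iff.mp (Finset.mem_range.mp hl)
    simp only [Pi.smul_apply, smul_eq_mul]
    rw [uvec, ← hm]
    have h1 : (-Real.exp (-t))^(m-l) = (-1:ℝ)^(m-l) * Real.exp (-t)^(m-l) := by
      rw [neg_pow]
    have h2 : Real.exp (-t) ^ (m-l) = Real.exp (((m-l:ℕ):ℝ) * (-t)) :=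
      (Real.exp_nat_mul _ _).symm
    have h3 : ((m-l : ℕ):ℝ) = (m:ℝ) - (l:ℝ) := by
      rw [Nat.cast_sub hlm]
    have h4 : (-1:ℝ)^(m+l) = (-1:ℝ)^(m-l) := by
      conv_lhs => rw [show m + l = (m-l) + 2*l by omega]
      rw [pow_add, pow_mul]
      norm_num
    rw [h4, h1, h2, h3, one_pow]
    have hexp : Real.exp (t * -((d:ℝ) - (m:ℝ)))
        * Real.exp (((m:ℝ) - (l:ℝ)) * (-t)) = Real.exp (t * -((d:ℝ) - l)) := by
      rw [← Real.exp_add]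
      ring_nf
    linear_combination (-((-1:ℝ)^(m-l) * (m.choose l : ℝ) * Sfun K d q0 y)) * hexp
  rw [Finset.sum_congr rfl hterm, ← Finset.sum_mul, ← Finset.mul_sum, ← hbinom]
  ring_nf

lemma Sfun_pos (hK : 2 ≤ K) (q0 : (Fin d → Fin K) → ℝ)
    (hq0nonneg : ∀ y, 0 ≤ q0 y) (hA2 : ∀ y, 0 < q0 y ↔ numK K d y = 0)
    (y : Fin d → Fin K) : 0 < Sfun K d q0 y := by
  have hKpos : 0 < K := by omega
  set t0 : Fin K := ⟨0, hKpos⟩ with ht0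
  have ht0ne : t0 ≠ maskTok K := by
    intro h
    have : (0:ℕ) = K - 1 := congrArg Fin.val h
    omega
  set x0 : Fin d → Fin K := fun j => if y j = maskTok K then t0 else y j with hx0
  have hx0num : numK K d x0 = 0 := by
    rw [numK_eq_zero_iff]
    intro j
    by_cases h : y j = maskTok K <;> simp [hx0, h, ht0ne]
  have hx0mem : x0 ∈ Finset.univ.filter
      (fun x : Fin d → Fin K => numK K d x = 0 ∧ ∀ j, y j ≠ maskTok K → x j = y j) := by
    simp only [Finset.mem_filter, Finset.mem_univ, true_and]
    exact ⟨hx0num, fun j hj => by simp [hx0, hj]⟩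
  have hx0pos : 0 < q0 x0 := (hA2 x0).mpr hx0num
  have hle : q0 x0 ≤ Sfun K d q0 y :=
    Finset.single_le_sum (f := q0) (fun x _ => hq0nonneg x) hx0mem
  linarith

lemma Sfun_update_le (q0 : (Fin d → Fin K) → ℝ)
    (hq0nonneg : ∀ y, 0 ≤ q0 y) (y : Fin d → Fin K) (i : Fin d) (k : Fin K)
    (hi : y i = maskTok K) :
    Sfun K d q0 (Function.update y i k) ≤ Sfun K d q0 y := by
  refine Finset.sum_le_sum_of_subset_of_nonneg ?_ (fun x _ _ => hq0nonneg x)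
  intro x hx
  simp only [Finset.mem_filter, Finset.mem_univ, true_and] at hx ⊢
  obtain ⟨h0, hag⟩ := hx
  refine ⟨h0, fun j hj => ?_⟩
  have hne : j ≠ i := fun h => by subst h; exact hj hi
  have := hag j (by rw [Function.update_of_ne hne]; exact hj)
  rwa [Function.update_of_ne hne] at this

end more

/-- Under Assumption [A2], for every `s > 0` the forward marginal is positive
and the discrete score at a masked coordinate is bounded:
`q_s(y[i→k]) / q_s(y) ≤ 1/(e^s - 1)`. -/
theorem score_bound (K d : ℕ) [NeZero K] (hK : 2 ≤ K) (hd : 1 ≤ d)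
    (q0 : (Fin d → Fin K) → ℝ)
    (hq0nonneg : ∀ y, 0 ≤ q0 y) (hq0sum : ∑ y, q0 y = 1)
    (hA2 : ∀ y, 0 < q0 y ↔ numK K d y = 0)
    (s : ℝ) (hs : 0 < s) (y : Fin d → Fin K)
    (i : Fin d) (hi : y i = maskTok K) (k : Fin K) (hk : k ≠ maskTok K) :
    0 < qt K d q0 s y ∧
    qt K d q0 s (Function.update y i k) / qt K d q0 s y
      ≤ 1 / (Real.exp s - 1) := by
  have hi_mem : i ∈ Finset.univ.filter (fun j => y j = maskTok K) := by simp [hi]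
  have hm1 : 0 < numK K d y := by
    rw [numK]; exact Finset.card_pos.mpr ⟨i, hi_mem⟩
  obtain ⟨n, hn⟩ : ∃ n, numK K d y = n + 1 := ⟨numK K d y - 1, by omega⟩
  have hy' : numK K d (Function.update y i k) = n := by
    rw [numK_update K d y i k hi hk]; omega
  have hqy := qt_eq K d q0 hq0nonneg hA2 s y
  have hqy' := qt_eq K d q0 hq0nonneg hA2 s (Function.update y i k)
  rw [hy'] at hqy'
  rw [hn] at hqy
  have hS : 0 < Sfun K d q0 y := Sfun_pos K d hK q0 hq0nonneg hA2 y
  have hSle : Sfun K d q0 (Function.update y i k) ≤ Sfun K d q0 y :=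
    Sfun_update_le K d q0 hq0nonneg y i k hi
  have hS' : 0 ≤ Sfun K d q0 (Function.update y i k) :=
    Finset.sum_nonneg fun x _ => hq0nonneg x
  have hP : 0 < 1 - Real.exp (-s) := by
    have : Real.exp (-s) < 1 := Real.exp_lt_one_iff.mpr (by linarith)
    linarith
  have hqypos : 0 < qt K d q0 s y := by
    rw [hqy]
    exact mul_pos (mul_pos (Real.exp_pos _) (pow_pos hP _)) hS
  refine ⟨hqypos, ?_⟩
  have hEs : 0 < Real.exp s - 1 := by
    have : (1:ℝ) < Real.exp s := Real.one_lt_exp_iff.mpr hs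
    linarith
  rw [div_le_div_iff₀ hqypos hEs, one_mul]
  rw [hqy, hqy']
  have hEs1 : Real.exp s - 1 = Real.exp s * (1 - Real.exp (-s)) := by
    rw [mul_sub, mul_one, ← Real.exp_add]
    simp
  have hEm : Real.exp (s * -((d:ℝ) - ((n:ℕ):ℝ))) * Real.exp s
      = Real.exp (s * -((d:ℝ) - ((n:ℕ):ℝ) - 1)) := by
    rw [← Real.exp_add]; congr 1; ring
  have hcast : ((n:ℕ):ℝ) + 1 = (((n+1:ℕ)):ℝ) := by push_cast; ring
  calc Real.exp (s * -((d:ℝ) - ((n:ℕ):ℝ))) * (1 - Real.exp (-s)) ^ n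
        * Sfun K d q0 (Function.update y i k) * (Real.exp s - 1)
      = (Real.exp (s * -((d:ℝ) - ((n:ℕ):ℝ))) * Real.exp s)
          * ((1 - Real.exp (-s)) ^ n * (1 - Real.exp (-s)))
          * Sfun K d q0 (Function.update y i k) := by
        rw [hEs1]; ring
    _ = Real.exp (s * -((d:ℝ) - (((n+1:ℕ)):ℝ))) * (1 - Real.exp (-s)) ^ (n+1)
          * Sfun K d q0 (Function.update y i k) := by
        rw [hEm, ← pow_succ]
        congr 3
        push_cast
        ring
    _ ≤ Real.exp (s * -((d:ℝ) - (((n+1:ℕ)):ℝ))) * (1 - Real.exp (-s)) ^ (n+1)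
          * Sfun K d q0 y := by
        apply mul_le_mul_of_nonneg_left hSle
        positivity
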